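/- Let N ≥ 1, l_1,…,l_N positive reals summing to 1, g > 0, z_b ∈ C¹(ℝ²), and let h and 𝐮_α = (u_α, v_α) (α = 1,…,N) be C¹ on an open set Ω ⊂ ℝ_t × ℝ²_{x,y}. Set h_α = l_α h, G_{α+1/2} = − Σ_{j=1}^N ( Σ_{p=1}^α l_p − 𝟙_{j ≤ α} ) ∇_{x,y}·(h_j 𝐮_j) for 0 ≤ α ≤ N (so G_{1/2} = G_{N+1/2} = 0), and define the upwinded interface velocities 𝐮_{α+1/2} := 𝐮_α if G_{α+1/2} ≤ 0 and 𝐮_{α+1} if G_{α+1/2} > 0, for 1 ≤ α ≤ N−1. Assume on Ω the total mass equation ∂_t h + Σ_α ∇_{x,y}·(h_α 𝐮_α) = 0 and, for each α, the layer momentum equation ∂_t(h_α 𝐮_α) + ∇_{x,y}·(h_α 𝐮_α ⊗ 𝐮_α) + ∇_{x,y}((g/2) h h_α) = − g h_α ∇_{x,y} z_b + 𝐮_{α+1/2} G_{α+1/2} − 𝐮_{α−1/2} G_{α−1/2}. Then, with E_α := h_α|𝐮_α|²/2 + (g/2) h_α h + g h_α z_b, the global energy balance holds on Ω: ∂_t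 Σ_{α=1}^N E_α + ∇_{x,y}· Σ_{α=1}^N 𝐮_α ( E_α + (g/2) h_α h ) = − Σ_{α=1}^{N−1} (1/2) |𝐮_{α+1} − 𝐮_α|² |G_{α+1/2}|; in particular the right-hand side is nonpositive. -/

import Mathlib

open MeasureTheory

/-- Partial derivative in time `t` of a function of `(t, x, y)`. -/
noncomputable def pt (f : ℝ × ℝ × ℝ → ℝ) (q : ℝ × ℝ × ℝ) : ℝ :=
  deriv (fun s => f (s, q.2.1, q.2.2)) q.1

/-- Partial derivative in `x` of a function of `(t, x, y)`. -/
noncomputable def px (f : ℝ × ℝ × ℝ → ℝ) (q : ℝ × ℝ × ℝ) : ℝ :=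
  deriv (fun s => f (q.1, s, q.2.2)) q.2.1

/-- Partial derivative in `y` of a function of `(t, x, y)`. -/
noncomputable def py (f : ℝ × ℝ × ℝ → ℝ) (q : ℝ × ℝ × ℝ) : ℝ :=
  deriv (fun s => f (q.1, q.2.1, s)) q.2.2

/-- Horizontal divergence `∇_{x,y}·F` of a horizontal vector field. -/
noncomputable def hdiv (F : ℝ × ℝ × ℝ → ℝ × ℝ) (q : ℝ × ℝ × ℝ) : ℝ :=
  px (fun p => (F p).1) q + py (fun p => (F p).2) q

lemma fst_sum' {ι : Type*} (s : Finset ι) (f : ι → ℝ × ℝ) :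
    (∑ i ∈ s, f i).1 = ∑ i ∈ s, (f i).1 := by
  induction s using Finset.cons_induction with
  | empty => simp
  | cons a s ha ih => simp [Finset.sum_cons, ih]

lemma snd_sum' {ι : Type*} (s : Finset ι) (f : ι → ℝ × ℝ) :
    (∑ i ∈ s, f i).2 = ∑ i ∈ s, (f i).2 := by
  induction s using Finset.cons_induction with
  | empty => simp
  | cons a s ha ih => simp [Finset.sum_cons, ih]

lemma icc_to_range (f : ℕ → ℝ) (n : ℕ) :
    ∑ α ∈ Finset.Icc 1 n, f α = ∑ i ∈ Finset.range n, f (i + 1) := by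
  induction n with
  | zero => simp
  | succ k ih =>
      rw [Finset.sum_Icc_succ_top (by omega), ih, Finset.sum_range_succ]

lemma telescope (M : ℕ) (A B Gv : ℕ → ℝ) (h0 : Gv 0 = 0) (hNv : Gv (M + 1) = 0) :
    ∑ α ∈ Finset.Icc 1 (M + 1), (A α * Gv α - B α * Gv (α - 1))
      = ∑ α ∈ Finset.Icc 1 M, (A α - B (α + 1)) * Gv α := by
  rw [icc_to_range, icc_to_range]
  simp only [Nat.add_sub_cancel]
  rw [Finset.sum_sub_distrib, Finset.sum_range_succ, Finset.sum_range_succ']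
  rw [hNv, h0]
  simp only [mul_zero, add_zero]
  rw [← Finset.sum_sub_distrib]
  exact Finset.sum_congr rfl fun i _ => by ring

lemma layer_energy (g la : ℝ) (zb : ℝ × ℝ → ℝ) (h : ℝ × ℝ × ℝ → ℝ)
    (w : ℝ × ℝ × ℝ → ℝ × ℝ) (m E1 : ℝ × ℝ × ℝ → ℝ)
    (hm : ∀ p, m p = la * h p)
    (hE1 : ∀ p, E1 p = m p * ((w p).1 ^ 2 + (w p).2 ^ 2) / 2
        + g / 2 * m p * h p + g * m p * zb (p.2.1, p.2.2))
    (t x y : ℝ)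
    (hdh : DifferentiableAt ℝ h (t, x, y)) (hdw : DifferentiableAt ℝ w (t, x, y))
    (hdz : Differentiable ℝ zb)
    (GA GB UA VA UB VB : ℝ)
    (mass : la * pt h (t, x, y) + px (fun p => m p * (w p).1) (t, x, y)
        + py (fun p => m p * (w p).2) (t, x, y) = GA - GB)
    (momx : pt (fun p => m p * (w p).1) (t, x, y)
        + px (fun p => m p * (w p).1 * (w p).1) (t, x, y)
        + py (fun p => m p * (w p).2 * (w p).1) (t, x, y)
        + px (fun p => g / 2 * h p * m p) (t, x, y)
      = -(g * m (t, x, y) * px (fun p => zb (p.2.1, p.2.2)) (t, x, y)) + UA * GA - UB * GB)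
    (momy : pt (fun p => m p * (w p).2) (t, x, y)
        + px (fun p => m p * (w p).1 * (w p).2) (t, x, y)
        + py (fun p => m p * (w p).2 * (w p).2) (t, x, y)
        + py (fun p => g / 2 * h p * m p) (t, x, y)
      = -(g * m (t, x, y) * py (fun p => zb (p.2.1, p.2.2)) (t, x, y)) + VA * GA - VB * GB) :
    DifferentiableAt ℝ (fun s => E1 (s, x, y)) t ∧
    DifferentiableAt ℝ (fun s => (E1 (t, s, y) + g / 2 * m (t, s, y) * h (t, s, y)) * (w (t, s, y)).1) x ∧
    DifferentiableAt ℝ (fun s => (E1 (t, x, s) + g / 2 * m (t, x, s) * h (t, x, s)) * (w (t, x, s)).2) y ∧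
    pt E1 (t, x, y) + px (fun p => (E1 p + g / 2 * m p * h p) * (w p).1) (t, x, y)
      + py (fun p => (E1 p + g / 2 * m p * h p) * (w p).2) (t, x, y)
    = ((w (t, x, y)).1 * UA + (w (t, x, y)).2 * VA
        - ((w (t, x, y)).1 ^ 2 + (w (t, x, y)).2 ^ 2) / 2 + g * (h (t, x, y) + zb (x, y))) * GA
      - ((w (t, x, y)).1 * UB + (w (t, x, y)).2 * VB
        - ((w (t, x, y)).1 ^ 2 + (w (t, x, y)).2 ^ 2) / 2 + g * (h (t, x, y) + zb (x, y))) * GB := by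
  -- 1-d restrictions of the atoms
  have dht : DifferentiableAt ℝ (fun s => h (s, x, y)) t :=
    hdh.comp t (DifferentiableAt.prodMk differentiableAt_id (differentiableAt_const _))
  have dhx : DifferentiableAt ℝ (fun s => h (t, s, y)) x :=
    hdh.comp x (DifferentiableAt.prodMk (differentiableAt_const _) (DifferentiableAt.prodMk differentiableAt_id (differentiableAt_const _)))
  have dhy : DifferentiableAt ℝ (fun s => h (t, x, s)) y :=
    hdh.comp y (DifferentiableAt.prodMk (differentiableAt_const _) (DifferentiableAt.prodMk (differentiableAt_const _) differentiableAt_id))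
  have dwt : DifferentiableAt ℝ (fun s => w (s, x, y)) t :=
    hdw.comp t (DifferentiableAt.prodMk differentiableAt_id (differentiableAt_const _))
  have dwx : DifferentiableAt ℝ (fun s => w (t, s, y)) x :=
    hdw.comp x (DifferentiableAt.prodMk (differentiableAt_const _) (DifferentiableAt.prodMk differentiableAt_id (differentiableAt_const _)))
  have dwy : DifferentiableAt ℝ (fun s => w (t, x, s)) y :=
    hdw.comp y (DifferentiableAt.prodMk (differentiableAt_const _) (DifferentiableAt.prodMk (differentiableAt_const _) differentiableAt_id))
  have Hht := dht.hasDerivAt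
  have Hhx := dhx.hasDerivAt
  have Hhy := dhy.hasDerivAt
  have Hut := dwt.fst.hasDerivAt
  have Hux := dwx.fst.hasDerivAt
  have Huy := dwy.fst.hasDerivAt
  have Hvt := dwt.snd.hasDerivAt
  have Hvx := dwx.snd.hasDerivAt
  have Hvy := dwy.snd.hasDerivAt
  have Hzx : HasDerivAt (fun s => zb (s, y)) (deriv (fun s => zb (s, y)) x) x :=
    ((hdz.differentiableAt).comp x (DifferentiableAt.prodMk differentiableAt_id (differentiableAt_const _))).hasDerivAt
  have Hzy : HasDerivAt (fun s => zb (x, s)) (deriv (fun s => zb (x, s)) y) y :=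
    ((hdz.differentiableAt).comp y (DifferentiableAt.prodMk (differentiableAt_const _) differentiableAt_id)).hasDerivAt
  -- expand m, E1 and the partial-derivative notations
  simp only [pt, px, py, hE1, hm] at mass momx momy ⊢
  -- composite derivatives, t-direction
  have dt1 : HasDerivAt (fun s => la * h (s, x, y) * (w (s, x, y)).1) _ t :=
    ((hasDerivAt_const t la).mul Hht).mul Hut
  have dt2 : HasDerivAt (fun s => la * h (s, x, y) * (w (s, x, y)).2) _ t :=
    ((hasDerivAt_const t la).mul Hht).mul Hvt
  have dtE : HasDerivAt (fun s => la * h (s, x, y) * ((w (s, x, y)).1 ^ 2 + (w (s, x, y)).2 ^ 2) / 2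
      + g / 2 * (la * h (s, x, y)) * h (s, x, y)
      + g * (la * h (s, x, y)) * zb (x, y)) _ t :=
    (((((hasDerivAt_const t la).mul Hht).mul ((Hut.pow 2).add (Hvt.pow 2))).div_const 2).add
      ((((hasDerivAt_const t (g / 2)).mul ((hasDerivAt_const t la).mul Hht))).mul Hht)).add
      ((((hasDerivAt_const t g).mul ((hasDerivAt_const t la).mul Hht))).mul (hasDerivAt_const t (zb (x, y))))
  -- x-direction
  have dx1 : HasDerivAt (fun s => la * h (t, s, y) * (w (t, s, y)).1) _ x :=
    ((hasDerivAt_const x la).mul Hhx).mul Hux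
  have dx2 : HasDerivAt (fun s => la * h (t, s, y) * (w (t, s, y)).1 * (w (t, s, y)).1) _ x :=
    (((hasDerivAt_const x la).mul Hhx).mul Hux).mul Hux
  have dx3 : HasDerivAt (fun s => la * h (t, s, y) * (w (t, s, y)).1 * (w (t, s, y)).2) _ x :=
    (((hasDerivAt_const x la).mul Hhx).mul Hux).mul Hvx
  have dx4 : HasDerivAt (fun s => g / 2 * h (t, s, y) * (la * h (t, s, y))) _ x :=
    ((hasDerivAt_const x (g / 2)).mul Hhx).mul ((hasDerivAt_const x la).mul Hhx)
  have dxF : HasDerivAt (fun s =>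
      (la * h (t, s, y) * ((w (t, s, y)).1 ^ 2 + (w (t, s, y)).2 ^ 2) / 2
        + g / 2 * (la * h (t, s, y)) * h (t, s, y)
        + g * (la * h (t, s, y)) * zb (s, y)
        + g / 2 * (la * h (t, s, y)) * h (t, s, y)) * (w (t, s, y)).1) _ x :=
    (((((((hasDerivAt_const x la).mul Hhx).mul ((Hux.pow 2).add (Hvx.pow 2))).div_const 2).add
        (((hasDerivAt_const x (g / 2)).mul ((hasDerivAt_const x la).mul Hhx)).mul Hhx)).add
        (((hasDerivAt_const x g).mul ((hasDerivAt_const x la).mul Hhx)).mul Hzx)).add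
        (((hasDerivAt_const x (g / 2)).mul ((hasDerivAt_const x la).mul Hhx)).mul Hhx)).mul Hux
  -- y-direction
  have dy1 : HasDerivAt (fun s => la * h (t, x, s) * (w (t, x, s)).2) _ y :=
    ((hasDerivAt_const y la).mul Hhy).mul Hvy
  have dy2 : HasDerivAt (fun s => la * h (t, x, s) * (w (t, x, s)).2 * (w (t, x, s)).1) _ y :=
    (((hasDerivAt_const y la).mul Hhy).mul Hvy).mul Huy
  have dy3 : HasDerivAt (fun s => la * h (t, x, s) * (w (t, x, s)).2 * (w (t, x, s)).2) _ y :=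
    (((hasDerivAt_const y la).mul Hhy).mul Hvy).mul Hvy
  have dy4 : HasDerivAt (fun s => g / 2 * h (t, x, s) * (la * h (t, x, s))) _ y :=
    ((hasDerivAt_const y (g / 2)).mul Hhy).mul ((hasDerivAt_const y la).mul Hhy)
  have dyF : HasDerivAt (fun s =>
      (la * h (t, x, s) * ((w (t, x, s)).1 ^ 2 + (w (t, x, s)).2 ^ 2) / 2
        + g / 2 * (la * h (t, x, s)) * h (t, x, s)
        + g * (la * h (t, x, s)) * zb (x, s)
        + g / 2 * (la * h (t, x, s)) * h (t, x, s)) * (w (t, x, s)).2) _ y :=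
    (((((((hasDerivAt_const y la).mul Hhy).mul ((Huy.pow 2).add (Hvy.pow 2))).div_const 2).add
        (((hasDerivAt_const y (g / 2)).mul ((hasDerivAt_const y la).mul Hhy)).mul Hhy)).add
        (((hasDerivAt_const y g).mul ((hasDerivAt_const y la).mul Hhy)).mul Hzy)).add
        (((hasDerivAt_const y (g / 2)).mul ((hasDerivAt_const y la).mul Hhy)).mul Hhy)).mul Hvy
  refine ⟨dtE.differentiableAt, dxF.differentiableAt, dyF.differentiableAt, ?_⟩
  rw [dx1.deriv, dy1.deriv] at mass
  rw [dt1.deriv, dx2.deriv, dy2.deriv, dx4.deriv] at momx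
  rw [dt2.deriv, dx3.deriv, dy3.deriv, dy4.deriv] at momy
  rw [dtE.deriv, dxF.deriv, dyF.deriv]
  simp only [Pi.mul_apply, Pi.add_apply, Pi.pow_apply, Pi.div_apply] at mass momx momy ⊢
  linear_combination (w (t, x, y)).1 * momx + (w (t, x, y)).2 * momy
    + (g * (h (t, x, y) + zb (x, y)) - ((w (t, x, y)).1 ^ 2 + (w (t, x, y)).2 ^ 2) / 2) * mass

/-- global energy balance of the layer-averaged hydrostatic Euler
system with the upwinded interface velocities. -/
theorem stmt1
    (N : ℕ) (hN : 1 ≤ N) (g : ℝ) (hg : 0 < g)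
    (l : ℕ → ℝ) (hl : ∀ j ∈ Finset.Icc 1 N, 0 < l j)
    (hlsum : ∑ j ∈ Finset.Icc 1 N, l j = 1)
    (zb : ℝ × ℝ → ℝ) (hzbC1 : ContDiff ℝ 1 zb)
    (Ω : Set (ℝ × ℝ × ℝ)) (hΩ : IsOpen Ω)
    (h : ℝ × ℝ × ℝ → ℝ) (hhC1 : ContDiffOn ℝ 1 h Ω)
    (u : ℕ → ℝ × ℝ × ℝ → ℝ × ℝ)
    (huC1 : ∀ j ∈ Finset.Icc 1 N, ContDiffOn ℝ 1 (u j) Ω)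
    (hlay : ℕ → ℝ × ℝ × ℝ → ℝ)
    (hlay_def : ∀ j q, hlay j q = l j * h q)
    (G : ℕ → ℝ × ℝ × ℝ → ℝ)
    (hG : ∀ α q, G α q = -∑ j ∈ Finset.Icc 1 N,
        ((∑ p ∈ Finset.Icc 1 α, l p) - (if j ≤ α then (1 : ℝ) else 0)) *
          hdiv (fun p => hlay j p • u j p) q)
    (uh : ℕ → ℝ × ℝ × ℝ → ℝ × ℝ)
    (huh : ∀ α ∈ Finset.Icc 1 (N - 1), ∀ q,
      uh α q = if G α q ≤ 0 then u α q else u (α + 1) q)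
    (hmass : ∀ q ∈ Ω,
      pt h q + ∑ j ∈ Finset.Icc 1 N, hdiv (fun p => hlay j p • u j p) q = 0)
    (hmom1 : ∀ α ∈ Finset.Icc 1 N, ∀ q ∈ Ω,
      pt (fun p => hlay α p * (u α p).1) q
        + px (fun p => hlay α p * (u α p).1 * (u α p).1) q
        + py (fun p => hlay α p * (u α p).2 * (u α p).1) q
        + px (fun p => g / 2 * h p * hlay α p) q
      = -(g * hlay α q * px (fun p => zb (p.2.1, p.2.2)) q)
        + (uh α q).1 * G α q - (uh (α - 1) q).1 * G (α - 1) q)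
    (hmom2 : ∀ α ∈ Finset.Icc 1 N, ∀ q ∈ Ω,
      pt (fun p => hlay α p * (u α p).2) q
        + px (fun p => hlay α p * (u α p).1 * (u α p).2) q
        + py (fun p => hlay α p * (u α p).2 * (u α p).2) q
        + py (fun p => g / 2 * h p * hlay α p) q
      = -(g * hlay α q * py (fun p => zb (p.2.1, p.2.2)) q)
        + (uh α q).2 * G α q - (uh (α - 1) q).2 * G (α - 1) q)
    (E : ℕ → ℝ × ℝ × ℝ → ℝ)
    (hE : ∀ α q, E α q = hlay α q * ((u α q).1 ^ 2 + (u α q).2 ^ 2) / 2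
        + g / 2 * hlay α q * h q + g * hlay α q * zb (q.2.1, q.2.2)) :
    ∀ q ∈ Ω,
      pt (fun p => ∑ α ∈ Finset.Icc 1 N, E α p) q
        + hdiv (fun p => ∑ α ∈ Finset.Icc 1 N,
            (E α p + g / 2 * hlay α p * h p) • u α p) q
      = -∑ α ∈ Finset.Icc 1 (N - 1),
          (1 / 2) * (((u (α + 1) q).1 - (u α q).1) ^ 2
            + ((u (α + 1) q).2 - (u α q).2) ^ 2) * |G α q| := by
  intro q hq
  obtain ⟨t, x, y⟩ := q
  obtain ⟨M, rfl⟩ : ∃ M, N = M + 1 := ⟨N - 1, by omega⟩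
  simp only [Nat.add_sub_cancel] at huh ⊢
  have hmem : Ω ∈ nhds ((t, x, y) : ℝ × ℝ × ℝ) := hΩ.mem_nhds hq
  have hdh : DifferentiableAt ℝ h (t, x, y) :=
    (hhC1.differentiableOn one_ne_zero).differentiableAt hmem
  have hdz : Differentiable ℝ zb := hzbC1.differentiable one_ne_zero
  have hG0 : G 0 (t, x, y) = 0 := by
    rw [hG, neg_eq_zero]
    refine Finset.sum_eq_zero fun j hj => ?_
    obtain ⟨hj1, -⟩ := Finset.mem_Icc.mp hj
    rw [show Finset.Icc 1 0 = (∅ : Finset ℕ) from Finset.Icc_eq_empty (by omega),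
      Finset.sum_empty, if_neg (by omega)]
    ring
  have hGN : G (M + 1) (t, x, y) = 0 := by
    rw [hG, neg_eq_zero]
    refine Finset.sum_eq_zero fun j hj => ?_
    obtain ⟨-, hj2⟩ := Finset.mem_Icc.mp hj
    rw [hlsum, if_pos hj2]
    ring
  have masslayer : ∀ α ∈ Finset.Icc 1 (M + 1),
      l α * pt h (t, x, y) + px (fun p => hlay α p * (u α p).1) (t, x, y)
        + py (fun p => hlay α p * (u α p).2) (t, x, y)
        = G α (t, x, y) - G (α - 1) (t, x, y) := by
    intro α hα
    obtain ⟨hα1, hαN⟩ := Finset.mem_Icc.mp hα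
    obtain ⟨β, rfl⟩ : ∃ β, α = β + 1 := ⟨α - 1, by omega⟩
    have e1 : ∀ j ∈ Finset.Icc 1 (M + 1),
        ((∑ p ∈ Finset.Icc 1 β, l p) - (if j ≤ β then (1 : ℝ) else 0)) *
            hdiv (fun p => hlay j p • u j p) (t, x, y)
          - ((∑ p ∈ Finset.Icc 1 (β + 1), l p) - (if j ≤ β + 1 then (1 : ℝ) else 0)) *
            hdiv (fun p => hlay j p • u j p) (t, x, y)
        = (if j = β + 1 then hdiv (fun p => hlay j p • u j p) (t, x, y) else 0)
          - l (β + 1) * hdiv (fun p => hlay j p • u j p) (t, x, y) := by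
      intro j hj
      rw [Finset.sum_Icc_succ_top (by omega)]
      by_cases h1 : j = β + 1
      · rw [if_pos h1, if_neg (by omega), if_pos (by omega)]
        ring
      · by_cases h2 : j ≤ β
        · rw [if_neg h1, if_pos h2, if_pos (by omega)]; ring
        · rw [if_neg h1, if_neg h2, if_neg (by omega)]; ring
    have hsplit : G (β + 1) (t, x, y) - G (β + 1 - 1) (t, x, y)
        = l (β + 1) * pt h (t, x, y) + hdiv (fun p => hlay (β + 1) p • u (β + 1) p) (t, x, y) := by
      rw [show β + 1 - 1 = β from rfl, hG, hG, neg_sub_neg, ← Finset.sum_sub_distrib,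
        Finset.sum_congr rfl e1, Finset.sum_sub_distrib,
        Finset.sum_ite_eq' (Finset.Icc 1 (M + 1)) (β + 1)
          (fun j => hdiv (fun p => hlay j p • u j p) (t, x, y)),
        if_pos hα, ← Finset.mul_sum]
      have h2 : ∑ j ∈ Finset.Icc 1 (M + 1), hdiv (fun p => hlay j p • u j p) (t, x, y)
          = -pt h (t, x, y) := by linarith [hmass (t, x, y) hq]
      rw [h2]; ring
    rw [hsplit]
    simp only [hdiv, Prod.smul_fst, Prod.smul_snd, smul_eq_mul]
    ring
  have key := fun (α : ℕ) (hα : α ∈ Finset.Icc 1 (M + 1)) =>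
    layer_energy g (l α) zb h (u α) (hlay α) (E α)
      (fun p => hlay_def α p) (fun p => hE α p) t x y hdh
      (((huC1 α hα).differentiableOn one_ne_zero).differentiableAt hmem) hdz
      (G α (t, x, y)) (G (α - 1) (t, x, y))
      (uh α (t, x, y)).1 (uh α (t, x, y)).2 (uh (α - 1) (t, x, y)).1 (uh (α - 1) (t, x, y)).2
      (masslayer α hα) (hmom1 α hα (t, x, y) hq) (hmom2 α hα (t, x, y) hq)
  have hL1 : pt (fun p => ∑ α ∈ Finset.Icc 1 (M + 1), E α p) (t, x, y)
      = ∑ α ∈ Finset.Icc 1 (M + 1), pt (E α) (t, x, y) := by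
    simp only [pt]
    exact deriv_fun_sum fun α hα => (key α hα).1
  have hL2 : hdiv (fun p => ∑ α ∈ Finset.Icc 1 (M + 1),
        (E α p + g / 2 * hlay α p * h p) • u α p) (t, x, y)
      = (∑ α ∈ Finset.Icc 1 (M + 1),
          px (fun p => (E α p + g / 2 * hlay α p * h p) * (u α p).1) (t, x, y))
        + ∑ α ∈ Finset.Icc 1 (M + 1),
          py (fun p => (E α p + g / 2 * hlay α p * h p) * (u α p).2) (t, x, y) := by
    simp only [hdiv, px, py, fst_sum', snd_sum', Prod.smul_fst, Prod.smul_snd, smul_eq_mul]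
    rw [deriv_fun_sum fun α hα => (key α hα).2.1, deriv_fun_sum fun α hα => (key α hα).2.2.1]
  rw [hL1, hL2, ← Finset.sum_add_distrib, ← Finset.sum_add_distrib]
  have step : ∑ α ∈ Finset.Icc 1 (M + 1),
      (pt (E α) (t, x, y)
        + (px (fun p => (E α p + g / 2 * hlay α p * h p) * (u α p).1) (t, x, y)
          + py (fun p => (E α p + g / 2 * hlay α p * h p) * (u α p).2) (t, x, y)))
      = ∑ α ∈ Finset.Icc 1 (M + 1),
        (((u α (t, x, y)).1 * (uh α (t, x, y)).1 + (u α (t, x, y)).2 * (uh α (t, x, y)).2 - ((u α (t, x, y)).1 ^ 2 + (u α (t, x, y)).2 ^ 2) / 2 + g * (h (t, x, y) + zb (x, y))) * G α (t, x, y) - ((u α (t, x, y)).1 * (uh (α - 1) (t, x, y)).1 + (u α (t, x, y)).2 * (uh (α - 1) (t, x, y)).2 - ((u α (t, x, y)).1 ^ 2 + (u α (t, x, y)).2 ^ 2) / 2 + g * (h (t, x, y) + zb (x, y))) * G (α - 1) (t, x, y)) :=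
    Finset.sum_congr rfl fun α hα => by rw [← add_assoc]; exact (key α hα).2.2.2
  rw [step]
  have tele2 : ∑ α ∈ Finset.Icc 1 (M + 1),
      (((u α (t, x, y)).1 * (uh α (t, x, y)).1 + (u α (t, x, y)).2 * (uh α (t, x, y)).2 - ((u α (t, x, y)).1 ^ 2 + (u α (t, x, y)).2 ^ 2) / 2 + g * (h (t, x, y) + zb (x, y))) * G α (t, x, y) - ((u α (t, x, y)).1 * (uh (α - 1) (t, x, y)).1 + (u α (t, x, y)).2 * (uh (α - 1) (t, x, y)).2 - ((u α (t, x, y)).1 ^ 2 + (u α (t, x, y)).2 ^ 2) / 2 + g * (h (t, x, y) + zb (x, y))) * G (α - 1) (t, x, y))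
      = ∑ α ∈ Finset.Icc 1 M,
        (((u α (t, x, y)).1 * (uh α (t, x, y)).1 + (u α (t, x, y)).2 * (uh α (t, x, y)).2 - ((u α (t, x, y)).1 ^ 2 + (u α (t, x, y)).2 ^ 2) / 2 + g * (h (t, x, y) + zb (x, y))) - ((u (α + 1) (t, x, y)).1 * (uh ((α + 1) - 1) (t, x, y)).1 + (u (α + 1) (t, x, y)).2 * (uh ((α + 1) - 1) (t, x, y)).2 - ((u (α + 1) (t, x, y)).1 ^ 2 + (u (α + 1) (t, x, y)).2 ^ 2) / 2 + g * (h (t, x, y) + zb (x, y)))) * G α (t, x, y) :=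
    telescope M
      (fun α => ((u α (t, x, y)).1 * (uh α (t, x, y)).1 + (u α (t, x, y)).2 * (uh α (t, x, y)).2 - ((u α (t, x, y)).1 ^ 2 + (u α (t, x, y)).2 ^ 2) / 2 + g * (h (t, x, y) + zb (x, y))))
      (fun α => ((u α (t, x, y)).1 * (uh (α - 1) (t, x, y)).1 + (u α (t, x, y)).2 * (uh (α - 1) (t, x, y)).2 - ((u α (t, x, y)).1 ^ 2 + (u α (t, x, y)).2 ^ 2) / 2 + g * (h (t, x, y) + zb (x, y))))
      (fun α => G α (t, x, y)) hG0 hGN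
  rw [tele2, ← Finset.sum_neg_distrib]
  refine Finset.sum_congr rfl fun α hα => ?_
  have hu1 := huh α hα (t, x, y)
  simp only [Nat.add_sub_cancel]
  rcases le_or_gt (G α (t, x, y)) 0 with hle | hlt
  · rw [hu1, if_pos hle, abs_of_nonpos hle]
    ring
  · rw [hu1, if_neg (not_le.mpr hlt), abs_of_pos hlt]
    ring
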